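/- (Lower bound on growth via the augmentation ideal) Let G be a group and let S be a finite subset of G generating G as a semigroup (every element of G is a product of elements of S). Let γ_G^S(n) denote the number of elements of G expressible as products of at most n elements of S. Let F be a field, let F[G] be the group algebra of G over F, let Δ ⊆ F[G] be the augmentation ideal (the kernel of the F-algebra homomorphism F[G] → F sending every group element to 1), and let a_n = dim_F(Δⁿ/Δⁿ⁺¹) be the dimension of the n-th quotient of powers of Δ as an F-vector space. Then for every n ∈ ℕ, γ_G^S(n) ≥ a_n. -/

import Mathlib

/-- The semigroup growth function of a group `G` with respect to a set `S` of semigroup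
generators: `semigroupGrowth S n` counts the elements of `G` expressible as products of
at most `n` elements of `S` (no inverses allowed). -/
noncomputable def semigroupGrowth {G : Type*} [Group G] (S : Set G) (n : ℕ) : ℕ :=
  Nat.card {g : G // ∃ l : List G, l.length ≤ n ∧ (∀ x ∈ l, x ∈ S) ∧ l.prod = g}

/-- The augmentation ideal `Δ` of the group algebra `F[G]`: the kernel of the
`F`-algebra homomorphism `F[G] → F` sending every group element to `1`. -/
noncomputable def augmentationIdeal (F : Type*) [Field F] (G : Type*) [Group G] :
    Ideal (MonoidAlgebra F G) :=
  RingHom.ker ((MonoidAlgebra.lift F F G) 1)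

namespace AugGrowthAux

open MonoidAlgebra Submodule

variable {G : Type*} [Group G] {F : Type*} [Field F]

/-- The augmentation map. -/
noncomputable def ε (F : Type*) [Field F] (G : Type*) [Group G] :
    MonoidAlgebra F G →ₐ[F] F := (MonoidAlgebra.lift F F G) 1

lemma mem_aug {x : MonoidAlgebra F G} :
    x ∈ augmentationIdeal F G ↔ ε F G x = 0 := RingHom.mem_ker

lemma eps_of (g : G) : ε F G (MonoidAlgebra.of F G g) = 1 := by
  simp [ε, MonoidAlgebra.lift_of]

lemma of_sub_one_mem (g : G) :
    (MonoidAlgebra.of F G g : MonoidAlgebra F G) - 1 ∈ augmentationIdeal F G := by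
  rw [mem_aug, map_sub, map_one, eps_of, sub_self]

/-- The ball of radius `n`. -/
def Bset (S : Set G) (n : ℕ) : Set G :=
  {g : G | ∃ l : List G, l.length ≤ n ∧ (∀ x ∈ l, x ∈ S) ∧ l.prod = g}

lemma one_mem_Bset (S : Set G) (n : ℕ) : (1 : G) ∈ Bset S n :=
  ⟨[], by simp⟩

lemma Bset_mono (S : Set G) {m n : ℕ} (h : m ≤ n) : Bset S m ⊆ Bset S n := by
  rintro g ⟨l, hl, hS, hp⟩; exact ⟨l, hl.trans h, hS, hp⟩

/-- span of group elements of the ball. -/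
noncomputable def V (S : Set G) (F : Type*) [Field F] (n : ℕ) :
    Submodule F (MonoidAlgebra F G) :=
  span F ((fun g => (MonoidAlgebra.of F G g : MonoidAlgebra F G)) '' Bset S n)

/-- span of `g - 1` for `g` in the ball. -/
noncomputable def W (S : Set G) (F : Type*) [Field F] (n : ℕ) :
    Submodule F (MonoidAlgebra F G) :=
  span F ((fun g => (MonoidAlgebra.of F G g : MonoidAlgebra F G) - 1) '' Bset S n)

/-- span of `s - 1` for `s` a generator. -/
noncomputable def U (S : Set G) (F : Type*) [Field F] :
    Submodule F (MonoidAlgebra F G) :=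
  span F ((fun g => (MonoidAlgebra.of F G g : MonoidAlgebra F G) - 1) '' S)

lemma U_le_aug (S : Set G) :
    U S F ≤ (augmentationIdeal F G).restrictScalars F := by
  rw [U, span_le]
  rintro _ ⟨g, -, rfl⟩
  exact of_sub_one_mem g

lemma W_le_V (S : Set G) (n : ℕ) : W S F n ≤ V S F n := by
  rw [W, span_le]
  rintro _ ⟨g, hg, rfl⟩
  have h1 : (MonoidAlgebra.of F G 1 : MonoidAlgebra F G) ∈ V S F n :=
    subset_span ⟨1, one_mem_Bset S n, rfl⟩
  rw [map_one] at h1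
  exact sub_mem (subset_span ⟨g, hg, rfl⟩) h1

lemma sub_mem_span (x : MonoidAlgebra F G) :
    x - (ε F G x) • 1 ∈
      span F (Set.range fun g : G => (MonoidAlgebra.of F G g : MonoidAlgebra F G) - 1) := by
  induction x using MonoidAlgebra.induction_on with
  | of g => rw [eps_of, one_smul]; exact subset_span ⟨g, rfl⟩
  | add f g hf hg =>
      have h : (f + g) - ε F G (f + g) • (1 : MonoidAlgebra F G)
          = (f - ε F G f • (1 : MonoidAlgebra F G))
            + (g - ε F G g • (1 : MonoidAlgebra F G)) := by
        rw [map_add, add_smul]; abel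
      rw [h]; exact add_mem hf hg
  | smul r f hf =>
      have h : (r • f) - ε F G (r • f) • (1 : MonoidAlgebra F G)
          = r • (f - ε F G f • (1 : MonoidAlgebra F G)) := by
        rw [map_smul, smul_eq_mul, mul_smul, smul_sub]
      rw [h]; exact smul_mem _ _ hf

lemma sq_eq : (augmentationIdeal F G) ^ 2
    = augmentationIdeal F G * augmentationIdeal F G := by
  rw [Submodule.pow_succ, Submodule.pow_one]

lemma list_mem (S : Set G) :
    ∀ l : List G, (∀ x ∈ l, x ∈ S) →
      (MonoidAlgebra.of F G l.prod : MonoidAlgebra F G) - 1 ∈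
        U S F ⊔ (augmentationIdeal F G ^ 2).restrictScalars F := by
  intro l
  induction l with
  | nil =>
      intro _
      rw [List.prod_nil, map_one, sub_self]
      exact zero_mem _
  | cons a l ih =>
      intro hS
      have ha : a ∈ S := hS a (List.mem_cons_self (a := a) (l := l))
      have hl : ∀ x ∈ l, x ∈ S := fun x hx => hS x (List.mem_cons_of_mem a hx)
      have key : (MonoidAlgebra.of F G (a :: l).prod : MonoidAlgebra F G) - 1
          = ((MonoidAlgebra.of F G a - 1) * (MonoidAlgebra.of F G l.prod - 1))
            + ((MonoidAlgebra.of F G a - 1) + (MonoidAlgebra.of F G l.prod - 1)) := by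
        rw [List.prod_cons, map_mul]; noncomm_ring
      rw [key]
      refine add_mem (mem_sup_right ?_) (add_mem (mem_sup_left ?_) (ih hl))
      · show (MonoidAlgebra.of F G a - 1) * (MonoidAlgebra.of F G l.prod - 1)
          ∈ augmentationIdeal F G ^ 2
        rw [sq_eq]
        exact Submodule.mul_mem_mul (of_sub_one_mem a) (of_sub_one_mem l.prod)
      · exact subset_span ⟨a, ha, rfl⟩

lemma aug_le (S : Set G) (hgen : ∀ g : G, ∃ l : List G, (∀ x ∈ l, x ∈ S) ∧ l.prod = g) :
    (augmentationIdeal F G).restrictScalars F ≤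
      U S F ⊔ (augmentationIdeal F G ^ 2).restrictScalars F := by
  intro x hx
  have hx0 : ε F G x = 0 := mem_aug.mp hx
  have hsp := sub_mem_span x
  rw [hx0, zero_smul, sub_zero] at hsp
  refine span_le.mpr ?_ hsp
  rintro _ ⟨g, rfl⟩
  obtain ⟨l, hlS, hlp⟩ := hgen g
  simpa [hlp] using list_mem S l hlS

lemma mul_W_U (S : Set G) (m : ℕ) : W S F m * U S F ≤ W S F (m + 1) := by
  rw [W, U, Submodule.span_mul_span, span_le]
  rintro _ ⟨_, ⟨⟨g, hg, rfl⟩, _, ⟨s, hs, rfl⟩, rfl⟩⟩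
  have key : ((MonoidAlgebra.of F G g : MonoidAlgebra F G) - 1)
      * ((MonoidAlgebra.of F G s : MonoidAlgebra F G) - 1)
      = ((MonoidAlgebra.of F G (g * s) : MonoidAlgebra F G) - 1)
        - ((MonoidAlgebra.of F G g : MonoidAlgebra F G) - 1)
        - ((MonoidAlgebra.of F G s : MonoidAlgebra F G) - 1) := by
    rw [map_mul]; noncomm_ring
  show ((MonoidAlgebra.of F G g : MonoidAlgebra F G) - 1)
      * ((MonoidAlgebra.of F G s : MonoidAlgebra F G) - 1) ∈ W S F (m + 1)
  rw [key]
  have hgs : g * s ∈ Bset S (m + 1) := by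
    obtain ⟨l, hl, hlS, hlp⟩ := hg
    refine ⟨l ++ [s], by simpa using hl, ?_, by simp [hlp]⟩
    intro x hx
    rcases List.mem_append.mp hx with h | h
    · exact hlS x h
    · exact (List.mem_singleton.mp h) ▸ hs
  have hg' : g ∈ Bset S (m + 1) := Bset_mono S (Nat.le_succ m) hg
  have hs' : s ∈ Bset S (m + 1) := ⟨[s], by simp, by simpa, by simp⟩
  exact sub_mem (sub_mem (subset_span ⟨_, hgs, rfl⟩) (subset_span ⟨_, hg', rfl⟩))
    (subset_span ⟨_, hs', rfl⟩)

lemma key_lemma (S : Set G) (hgen : ∀ g : G, ∃ l : List G, (∀ x ∈ l, x ∈ S) ∧ l.prod = g) :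
    ∀ n : ℕ, (augmentationIdeal F G ^ (n + 1)).restrictScalars F ≤
      (W S F (n + 1) ⊓ (augmentationIdeal F G ^ (n + 1)).restrictScalars F)
        ⊔ (augmentationIdeal F G ^ (n + 2)).restrictScalars F := by
  intro n
  induction n with
  | zero =>
      intro x hx
      have hx' : x ∈ augmentationIdeal F G := by
        rw [show augmentationIdeal F G = (augmentationIdeal F G) ^ 1 by
          rw [Submodule.pow_one]]
        exact hx
      obtain ⟨u, hu, v, hv, rfl⟩ := mem_sup.mp (aug_le S hgen hx')
      refine mem_sup.mpr ⟨u, ?_, v, hv, rfl⟩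
      refine mem_inf.mpr ⟨?_, ?_⟩
      · refine span_le.mpr ?_ hu
        rintro _ ⟨s, hs, rfl⟩
        exact subset_span ⟨s, ⟨[s], by simp, by simpa, by simp⟩, rfl⟩
      · show u ∈ augmentationIdeal F G ^ 1
        rw [Submodule.pow_one]
        exact U_le_aug S hu
  | succ n ih =>
      intro x hx
      have hx' : x ∈ augmentationIdeal F G ^ (n + 1) * augmentationIdeal F G := by
        rw [← Submodule.pow_succ]
        exact hx
      refine Submodule.mul_induction_on hx' ?_ (fun a b ha hb => add_mem ha hb)
      intro a ha y hy
      obtain ⟨w, hw, z, hz, rfl⟩ := mem_sup.mp (ih ha)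
      obtain ⟨hwW, hwI⟩ := mem_inf.mp hw
      obtain ⟨u, hu, v, hv, rfl⟩ := mem_sup.mp (aug_le S hgen hy)
      have expand : (w + z) * (u + v) = w * u + (w * v + z * (u + v)) := by
        noncomm_ring
      rw [expand]
      have h23 : augmentationIdeal F G ^ (n + 1) * augmentationIdeal F G ^ 2
          = augmentationIdeal F G ^ (n + 3) := by
        rw [sq_eq, ← mul_assoc, ← Submodule.pow_succ, ← Submodule.pow_succ]
      refine add_mem (mem_sup_left ?_) (mem_sup_right (add_mem ?_ ?_))
      · refine mem_inf.mpr ⟨mul_W_U S (n + 1) (Submodule.mul_mem_mul hwW hu), ?_⟩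
        show w * u ∈ augmentationIdeal F G ^ (n + 2)
        rw [Submodule.pow_succ]
        exact Submodule.mul_mem_mul hwI (U_le_aug S hu)
      · show w * v ∈ augmentationIdeal F G ^ (n + 3)
        rw [← h23]
        exact Submodule.mul_mem_mul hwI (by exact hv)
      · show z * (u + v) ∈ augmentationIdeal F G ^ (n + 3)
        rw [Submodule.pow_succ]
        refine Submodule.mul_mem_mul hz (add_mem (U_le_aug S hu) ?_)
        have hsq : (augmentationIdeal F G) ^ 2 ≤ augmentationIdeal F G := by
          rw [sq_eq]
          exact Submodule.mul_le.mpr fun a ha b hb => Ideal.mul_mem_left _ a hb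
        exact hsq hv

lemma main_span (S : Set G) (hgen : ∀ g : G, ∃ l : List G, (∀ x ∈ l, x ∈ S) ∧ l.prod = g) :
    ∀ n : ℕ, (augmentationIdeal F G ^ n).restrictScalars F ≤
      V S F n ⊔ (augmentationIdeal F G ^ (n + 1)).restrictScalars F := by
  intro n
  cases n with
  | zero =>
      intro x _
      have hx : x = (ε F G x) • (1 : MonoidAlgebra F G)
          + (x - (ε F G x) • (1 : MonoidAlgebra F G)) := by abel
      rw [hx]
      refine add_mem (mem_sup_left ?_) (mem_sup_right ?_)
      · have h1 : (MonoidAlgebra.of F G 1 : MonoidAlgebra F G) ∈ V S F 0 :=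
          subset_span ⟨1, one_mem_Bset S 0, rfl⟩
        rw [map_one] at h1
        exact smul_mem _ _ h1
      · show x - (ε F G x) • (1 : MonoidAlgebra F G) ∈ augmentationIdeal F G ^ 1
        rw [Submodule.pow_one, mem_aug]
        simp
  | succ n =>
      exact (key_lemma S hgen n).trans
        (sup_le_sup_right (inf_le_left.trans (W_le_V S (n + 1))) _)

lemma Bset_finite (S : Finset G) (n : ℕ) : (Bset (S : Set G) n).Finite := by
  classical
  have hfin : {l : List ↥(S : Set G) | l.length ≤ n}.Finite :=
    List.finite_length_le _ n
  have hsub : Bset (S : Set G) n ⊆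
      (fun l : List ↥(S : Set G) => (l.map Subtype.val).prod) '' {l | l.length ≤ n} := by
    rintro g ⟨l, hl, hS, rfl⟩
    refine ⟨l.attach.map (fun x => (⟨x.1, hS x.1 x.2⟩ : ↥(S : Set G))),
      by simpa using hl, ?_⟩
    simp only [List.map_map]
    have heq : (Subtype.val ∘ fun x : {x // x ∈ l} =>
        (⟨x.1, hS x.1 x.2⟩ : ↥(S : Set G))) = Subtype.val := rfl
    rw [heq, List.attach_map_subtype_val]
  exact (hfin.image _).subset hsub

end AugGrowthAux

/-- **Lower bound on growth via the augmentation ideal.** If `S` is a finite set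
generating `G` as a semigroup, `Δ ⊆ F[G]` the augmentation ideal and
`a_n = dim_F(Δⁿ/Δⁿ⁺¹)`, then `γ_G^S(n) ≥ a_n` for every `n`. -/
theorem growth_ge_augmentation_ideal_rank
    {G : Type*} [Group G] (S : Finset G)
    (hgen : ∀ g : G, ∃ l : List G, (∀ x ∈ l, x ∈ (S : Set G)) ∧ l.prod = g)
    (F : Type*) [Field F] (n : ℕ) :
    Module.rank F
      (↥(Submodule.restrictScalars F (augmentationIdeal F G ^ n)) ⧸
        Submodule.comap
          (Submodule.restrictScalars F (augmentationIdeal F G ^ n)).subtype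
          (Submodule.restrictScalars F (augmentationIdeal F G ^ (n + 1))))
      ≤ (semigroupGrowth (S : Set G) n : Cardinal) := by
  classical
  open AugGrowthAux Submodule in
  set A := (augmentationIdeal F G ^ n).restrictScalars F with hA
  set Bm := (augmentationIdeal F G ^ (n + 1)).restrictScalars F with hBm
  let f : A →ₗ[F] (MonoidAlgebra F G ⧸ Bm) := Bm.mkQ.comp A.subtype
  have hker : LinearMap.ker f = Submodule.comap A.subtype Bm := by
    rw [LinearMap.ker_comp, Submodule.ker_mkQ]
  have e1 : (A ⧸ Submodule.comap A.subtype Bm) ≃ₗ[F] LinearMap.range f := by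
    rw [← hker]; exact f.quotKerEquivRange
  rw [e1.rank_eq]
  have hrange : LinearMap.range f = A.map Bm.mkQ := by
    rw [LinearMap.range_comp, Submodule.range_subtype]
  rw [hrange]
  -- bound the image by the image of V
  have hVB : A ≤ V (S : Set G) F n ⊔ Bm := main_span (S : Set G) hgen n
  have hbot : Bm.map Bm.mkQ = ⊥ := by
    rw [eq_bot_iff]
    refine Submodule.map_le_iff_le_comap.mpr ?_
    intro x hx
    simp [Submodule.mem_comap, Submodule.Quotient.mk_eq_zero, hx]
  have hle : A.map Bm.mkQ ≤ (V (S : Set G) F n).map Bm.mkQ := by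
    calc A.map Bm.mkQ ≤ (V (S : Set G) F n ⊔ Bm).map Bm.mkQ := Submodule.map_mono hVB
      _ = (V (S : Set G) F n).map Bm.mkQ ⊔ Bm.map Bm.mkQ := Submodule.map_sup _ _ _
      _ = (V (S : Set G) F n).map Bm.mkQ := by rw [hbot, sup_bot_eq]
  refine (Submodule.rank_mono hle).trans ?_
  have hmap : (V (S : Set G) F n).map Bm.mkQ
      = span F (Bm.mkQ ''
          ((fun g => (MonoidAlgebra.of F G g : MonoidAlgebra F G)) '' Bset (S : Set G) n)) := by
    rw [V, Submodule.map_span]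
  rw [hmap]
  refine (rank_span_le _).trans ?_
  have hfin : (Bset (S : Set G) n).Finite := Bset_finite S n
  have hfin2 : ((fun g => (MonoidAlgebra.of F G g : MonoidAlgebra F G))
      '' Bset (S : Set G) n).Finite := hfin.image _
  haveI := hfin2.to_subtype
  haveI := hfin.to_subtype
  have h1 : Cardinal.mk ↥(Bm.mkQ ''
      ((fun g => (MonoidAlgebra.of F G g : MonoidAlgebra F G)) '' Bset (S : Set G) n))
      ≤ Cardinal.mk ↥((fun g => (MonoidAlgebra.of F G g : MonoidAlgebra F G))
          '' Bset (S : Set G) n) := Cardinal.mk_image_le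
  have h2 : Cardinal.mk ↥((fun g => (MonoidAlgebra.of F G g : MonoidAlgebra F G))
      '' Bset (S : Set G) n)
      = ((Nat.card ↥((fun g => (MonoidAlgebra.of F G g : MonoidAlgebra F G))
          '' Bset (S : Set G) n) : ℕ) : Cardinal) := Nat.cast_card.symm
  have h3 : Nat.card ↥((fun g => (MonoidAlgebra.of F G g : MonoidAlgebra F G))
      '' Bset (S : Set G) n) ≤ Nat.card ↥(Bset (S : Set G) n) :=
    Nat.card_image_le hfin
  have h4 : semigroupGrowth (S : Set G) n = Nat.card ↥(Bset (S : Set G) n) := rfl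
  rw [h4]
  exact h1.trans (h2.trans_le (Nat.cast_le.mpr h3))
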